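/- Let I be a closed interval of ℝ⁺ and H : I × ℝⁿ × ℝⁿ → ℝ with t ↦ H(t,x,p) measurable for all x,p. Assume (H.1.1) p ↦ H(t,x,p) is convex for all t ∈ I, x ∈ ℝⁿ; (H.1.2) for all r > 0 there exists a measurable C_r : I → ℝ⁺ with |H(t,x,p) − H(t,y,p)| ≤ C_r(t)(1+|p|)|x−y| for all t ∈ I, x,y ∈ B(0,r), p ∈ ℝⁿ; and (H.1.4) for all (t,x) ∈ I × ℝⁿ and all q̄ ∈ cl D(t,x) there exists ε > 0 with sup{H*(t,x,q) : q ∈ D(t,x) ∩ B(q̄,ε)} < +∞. Then: (i) D(t,x) := dom H*(t,x,·) is a nonempty closed convex subset of ℝⁿ for every (t,x); (ii) for all t ∈ I and r > 0, D(t,x) ⊂ D(t,y) + C_r(t)|x−y| B for all x,y ∈ B(0,r). -/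

import Mathlib

open Set Metric Pointwise

noncomputable section

abbrev En (n : ℕ) := EuclideanSpace ℝ (Fin n)

/-- The Fenchel transform (conjugate) of `g`, as an extended-real-valued function. -/
noncomputable def fenchel {n : ℕ} (g : En n → ℝ) (q : En n) : EReal :=
  ⨆ p : En n, (((inner ℝ q p : ℝ) - g p : ℝ) : EReal)

/-- The domain of the Fenchel transform of `g`. -/
def fdom {n : ℕ} (g : En n → ℝ) : Set (En n) := {q | fenchel g q < ⊤}

lemma mem_fdom_iff {n : ℕ} (g : En n → ℝ) (q : En n) :
    q ∈ fdom g ↔ ∃ M : ℝ, ∀ p, (inner ℝ q p : ℝ) - g p ≤ M := by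
  unfold fdom fenchel
  simp only [mem_setOf_eq]
  constructor
  · intro hq
    have hne : (⨆ p : En n, (((inner ℝ q p : ℝ) - g p : ℝ) : EReal)) ≠ ⊤ := hq.ne
    have hge : (((inner ℝ q (0:En n) : ℝ) - g 0 : ℝ) : EReal)
        ≤ ⨆ p : En n, (((inner ℝ q p : ℝ) - g p : ℝ) : EReal) :=
      le_iSup (fun p : En n => (((inner ℝ q p : ℝ) - g p : ℝ) : EReal)) 0
    have hnb : (⨆ p : En n, (((inner ℝ q p : ℝ) - g p : ℝ) : EReal)) ≠ ⊥ := fun h => by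
      rw [h, le_bot_iff] at hge
      exact EReal.coe_ne_bot _ hge
    refine ⟨(⨆ p : En n, (((inner ℝ q p : ℝ) - g p : ℝ) : EReal)).toReal, fun p => ?_⟩
    have h1 : (((inner ℝ q p : ℝ) - g p : ℝ) : EReal)
        ≤ ⨆ p : En n, (((inner ℝ q p : ℝ) - g p : ℝ) : EReal) :=
      le_iSup (fun p : En n => (((inner ℝ q p : ℝ) - g p : ℝ) : EReal)) p
    rw [← EReal.coe_toReal hne hnb] at h1
    exact_mod_cast h1
  · rintro ⟨M, hM⟩
    have h1 : (⨆ p : En n, (((inner ℝ q p : ℝ) - g p : ℝ) : EReal)) ≤ (M : EReal) :=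
      iSup_le fun p => by exact_mod_cast hM p
    exact lt_of_le_of_lt h1 (EReal.coe_lt_top M)

lemma norm_le_of_inner_le {n : ℕ} {v : En n} {c K : ℝ} (hc : 0 ≤ c)
    (hb : ∀ p : En n, (inner ℝ v p : ℝ) ≤ K + c * ‖p‖) : ‖v‖ ≤ c := by
  by_contra hlt
  push_neg at hlt
  have hv : 0 < ‖v‖ := lt_of_le_of_lt hc hlt
  set t : ℝ := (|K| + 1) / (‖v‖ * (‖v‖ - c)) with ht
  have hden : 0 < ‖v‖ * (‖v‖ - c) := mul_pos hv (by linarith)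
  have ht0 : 0 < t := div_pos (by positivity) hden
  have hB := hb (t • v)
  rw [real_inner_smul_right, real_inner_self_eq_norm_sq, norm_smul] at hB
  have key : t * (‖v‖ * (‖v‖ - c)) = |K| + 1 := div_mul_cancel₀ _ hden.ne'
  rw [Real.norm_eq_abs, abs_of_pos ht0] at hB
  nlinarith [le_abs_self K]

/-- Decompose a continuous linear functional on `En n × ℝ`. -/
lemma functional_decomp {n : ℕ} (f : (En n × ℝ) →L[ℝ] ℝ) :
    ∃ w : En n, ∀ p : En n, ∀ s : ℝ, f (p, s) = (inner ℝ w p : ℝ) + s * f ((0 : En n), 1) := by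
  refine ⟨(InnerProductSpace.toDual ℝ (En n)).symm
    (f.comp (ContinuousLinearMap.inl ℝ (En n) ℝ)), fun p s => ?_⟩
  have h1 : (inner ℝ ((InnerProductSpace.toDual ℝ (En n)).symm
      (f.comp (ContinuousLinearMap.inl ℝ (En n) ℝ))) p : ℝ)
      = f.comp (ContinuousLinearMap.inl ℝ (En n) ℝ) p :=
    InnerProductSpace.toDual_symm_apply
  rw [h1]
  have h2 : ((p, s) : En n × ℝ) = (p, 0) + s • ((0 : En n), 1) := by
    simp [Prod.ext_iff]
  rw [h2, map_add, map_smul]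
  simp [ContinuousLinearMap.comp_apply]

/-- Every finite convex function on `ℝⁿ` has an affine minorant. -/
lemma exists_affine_le {n : ℕ} (h : En n → ℝ) (hconv : ConvexOn ℝ univ h) :
    ∃ (q' : En n) (b : ℝ), ∀ p, (inner ℝ q' p : ℝ) - h p ≤ b := by
  have hcont : Continuous h := continuousOn_univ.1
    (hconv.continuousOn isOpen_univ)
  set S : Set (En n × ℝ) := {z | h z.1 < z.2} with hS
  have hSo : IsOpen S := isOpen_lt (hcont.comp continuous_fst) continuous_snd
  have hSc : Convex ℝ S := by
    rintro ⟨p1, s1⟩ hz1 ⟨p2, s2⟩ hz2 a b ha hb hab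
    simp only [hS, mem_setOf_eq, Prod.smul_mk, Prod.mk_add_mk, smul_eq_mul] at hz1 hz2 ⊢
    have hcc := hconv.2 (mem_univ p1) (mem_univ p2) ha hb hab
    simp only [smul_eq_mul] at hcc
    by_cases hA : 0 < a
    · have h1 : a * h p1 < a * s1 := by nlinarith
      have h2 : b * h p2 ≤ b * s2 := by nlinarith
      calc h (a • p1 + b • p2) ≤ a * h p1 + b * h p2 := hcc
        _ < a * s1 + b * s2 := by linarith
    · have ha0 : a = 0 := le_antisymm (not_lt.1 hA) ha
      have hb1 : b = 1 := by linarith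
      subst ha0; subst hb1
      simpa using hz2
  have hdisj : Disjoint S {((0 : En n), h 0 - 1)} := by
    rw [Set.disjoint_singleton_right]
    simp [hS]
  obtain ⟨f, u, hfu1, hfu2⟩ :=
    geometric_hahn_banach_open hSc hSo (convex_singleton _) hdisj
  obtain ⟨w, hw⟩ := functional_decomp f
  set α : ℝ := f ((0 : En n), 1) with hα
  have hfu2' : u ≤ (inner ℝ w (0 : En n) : ℝ) + (h 0 - 1) * α := by
    rw [← hw]; exact hfu2 _ rfl
  have hS1 : ∀ p : En n, ∀ s : ℝ, h p < s → (inner ℝ w p : ℝ) + s * α < u := by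
    intro p s hs
    rw [← hw]; exact hfu1 _ hs
  have hαle : α ≤ 0 := by
    by_contra hpos
    push_neg at hpos
    set s : ℝ := max (h 0 + 1) ((u - (inner ℝ w (0:En n) : ℝ)) / α + 1) with hsdef
    have hs1 : h 0 < s := lt_of_lt_of_le (by linarith) (le_max_left _ _)
    have hkey := hS1 0 s hs1
    have hs2 : (u - (inner ℝ w (0:En n) : ℝ)) / α < s :=
      lt_of_lt_of_le (by linarith) (le_max_right _ _)
    have := (div_lt_iff₀ hpos).1 hs2
    linarith
  have hαne : α ≠ 0 := by
    intro h0
    have h1 := hS1 0 (h 0 + 1) (by linarith)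
    rw [h0] at h1 hfu2'
    simp only [mul_zero, add_zero] at h1 hfu2'
    linarith
  have hαneg : α < 0 := lt_of_le_of_ne hαle hαne
  have hne' : (-α) ≠ 0 := ne_of_gt (by linarith)
  have hc : (-α)⁻¹ * α = -1 := by
    have hiv := inv_mul_cancel₀ hne'
    linear_combination -hiv
  have hlim : ∀ p : En n, (inner ℝ w p : ℝ) + h p * α ≤ u := by
    intro p
    by_contra hcon
    push_neg at hcon
    set δ : ℝ := (inner ℝ w p : ℝ) + h p * α - u with hδ
    have hδ0 : 0 < δ := by linarith
    have hdiv : 0 < δ / (2 * (-α)) := div_pos hδ0 (by linarith)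
    have hkey := hS1 p (h p + δ / (2 * (-α))) (by linarith)
    have hmul : (h p + δ / (2 * (-α))) * α = h p * α - δ / 2 := by
      have h2 : (2:ℝ) * (-α) ≠ 0 := by intro hz; apply hne'; linarith [hz]; 
      field_simp
      ring
    rw [hmul] at hkey
    linarith
  refine ⟨(-α)⁻¹ • w, (-α)⁻¹ * u, fun p => ?_⟩
  have hβ : (0:ℝ) < (-α)⁻¹ := inv_pos.2 (by linarith)
  have hle2 := mul_le_mul_of_nonneg_left (hlim p) hβ.le
  rw [real_inner_smul_left]
  have hexp : (-α)⁻¹ * ((inner ℝ w p : ℝ) + h p * α) = (-α)⁻¹ * (inner ℝ w p : ℝ) - h p := by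
    linear_combination (h p) * hc
  linarith

/-- Separation of a convex function from a continuous concave minorant. -/
lemma sep_lemma {n : ℕ} (h ℓ : En n → ℝ) (hconv : ConvexOn ℝ univ h)
    (hconc : ConcaveOn ℝ univ ℓ) (hcont : Continuous ℓ) (hle : ∀ p, ℓ p ≤ h p) :
    ∃ (q' : En n) (b : ℝ), (∀ p, (inner ℝ q' p : ℝ) - h p ≤ b) ∧
      (∀ p, ℓ p ≤ (inner ℝ q' p : ℝ) - b) := by
  set S : Set (En n × ℝ) := {z | z.2 < ℓ z.1} with hS
  have hSo : IsOpen S := isOpen_lt continuous_snd (hcont.comp continuous_fst)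
  have hSc : Convex ℝ S := by
    rintro ⟨p1, s1⟩ hz1 ⟨p2, s2⟩ hz2 a b ha hb hab
    simp only [hS, mem_setOf_eq, Prod.smul_mk, Prod.mk_add_mk, smul_eq_mul] at hz1 hz2 ⊢
    have hcc := hconc.2 (mem_univ p1) (mem_univ p2) ha hb hab
    simp only [smul_eq_mul] at hcc
    by_cases hA : 0 < a
    · have h1 : a * s1 < a * ℓ p1 := by nlinarith
      have h2 : b * s2 ≤ b * ℓ p2 := by nlinarith
      calc a * s1 + b * s2 < a * ℓ p1 + b * ℓ p2 := by linarith
        _ ≤ ℓ (a • p1 + b • p2) := hcc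
    · have ha0 : a = 0 := le_antisymm (not_lt.1 hA) ha
      have hb1 : b = 1 := by linarith
      subst ha0; subst hb1
      simpa using hz2
  have hTc : Convex ℝ {z : En n × ℝ | h z.1 ≤ z.2} := by
    have := hconv.convex_epigraph
    convert this using 1
    ext z
    simp
  have hdisj : Disjoint S {z : En n × ℝ | h z.1 ≤ z.2} := by
    rw [Set.disjoint_left]
    rintro z hzS hzT
    simp only [hS, mem_setOf_eq] at hzS hzT
    linarith [hle z.1]
  obtain ⟨f, u, hfu1, hfu2⟩ := geometric_hahn_banach_open hSc hSo hTc hdisj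
  obtain ⟨w, hw⟩ := functional_decomp f
  set α : ℝ := f ((0 : En n), 1) with hα
  have hS1 : ∀ p : En n, ∀ s : ℝ, s < ℓ p → (inner ℝ w p : ℝ) + s * α < u := by
    intro p s hs
    rw [← hw]; exact hfu1 _ hs
  have hT1 : ∀ p : En n, u ≤ (inner ℝ w p : ℝ) + h p * α := by
    intro p
    rw [← hw]; exact hfu2 (p, h p) (by simp)
  have hαge : 0 ≤ α := by
    by_contra hneg
    push_neg at hneg
    set s : ℝ := min (ℓ 0 - 1) ((u - (inner ℝ w (0:En n) : ℝ)) / α - 1) with hsdef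
    have hs1 : s < ℓ 0 := lt_of_le_of_lt (min_le_left _ _) (by linarith)
    have hkey := hS1 0 s hs1
    have hs2 : s < (u - (inner ℝ w (0:En n) : ℝ)) / α :=
      lt_of_le_of_lt (min_le_right _ _) (by linarith)
    have := (lt_div_iff_of_neg hneg).1 hs2
    linarith
  have hαne : α ≠ 0 := by
    intro h0
    have h1 := hS1 0 (ℓ 0 - 1) (by linarith)
    have h2 := hT1 0
    rw [h0] at h1 h2
    simp only [mul_zero, add_zero] at h1 h2
    linarith
  have hαpos : 0 < α := lt_of_le_of_ne hαge (Ne.symm hαne)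
  have hc : α⁻¹ * α = 1 := inv_mul_cancel₀ hαne
  have hlim : ∀ p : En n, (inner ℝ w p : ℝ) + ℓ p * α ≤ u := by
    intro p
    by_contra hcon
    push_neg at hcon
    set δ : ℝ := (inner ℝ w p : ℝ) + ℓ p * α - u with hδ
    have hδ0 : 0 < δ := by linarith
    have hdiv : 0 < δ / (2 * α) := div_pos hδ0 (by linarith)
    have hkey := hS1 p (ℓ p - δ / (2 * α)) (by linarith)
    have hmul : (ℓ p - δ / (2 * α)) * α = ℓ p * α - δ / 2 := by
      have h2 : (2:ℝ) * α ≠ 0 := by positivity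
      field_simp
    rw [hmul] at hkey
    linarith
  refine ⟨(-α⁻¹) • w, -(α⁻¹ * u), fun p => ?_, fun p => ?_⟩
  · have hle2 := mul_le_mul_of_nonneg_left (hT1 p) (inv_nonneg.2 hαpos.le)
    rw [real_inner_smul_left]
    have hexp : α⁻¹ * ((inner ℝ w p : ℝ) + h p * α) = α⁻¹ * (inner ℝ w p : ℝ) + h p := by
      linear_combination (h p) * hc
    linarith
  · have hle2 := mul_le_mul_of_nonneg_left (hlim p) (inv_nonneg.2 hαpos.le)
    rw [real_inner_smul_left]
    have hexp : α⁻¹ * ((inner ℝ w p : ℝ) + ℓ p * α) = α⁻¹ * (inner ℝ w p : ℝ) + ℓ p := by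
      linear_combination (ℓ p) * hc
    linarith

lemma fenchel_lsc {n : ℕ} (g : En n → ℝ) : LowerSemicontinuous (fenchel g) := by
  unfold fenchel
  apply lowerSemicontinuous_iSup
  intro p
  apply Continuous.lowerSemicontinuous
  exact continuous_coe_real_ereal.comp ((continuous_id.inner continuous_const).sub
    continuous_const)


/-- Under (H.1.1), (H.1.2) and (H.1.4): (i) `D(t,x)` is a nonempty closed convex subset
of `ℝⁿ`; (ii) `D(t,x) ⊂ D(t,y) + C_r(t)|x−y|B` for `x, y ∈ B(0,r)`. -/
theorem stmt_5 {n : ℕ} (I : Set ℝ) (hI : I ⊆ Ici 0) (hIcl : IsClosed I)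
    (hIoc : I.OrdConnected)
    (H : ℝ → En n → En n → ℝ)
    (hHmeas : ∀ x p, Measurable fun t : I => H t.1 x p)
    -- (H.1.1)
    (h11 : ∀ t ∈ I, ∀ x, ConvexOn ℝ univ (H t x))
    -- (H.1.2), with the Lipschitz modulus `C r` for the ball of radius `r`
    (C : ℝ → ℝ → ℝ)
    (hCmeas : ∀ r > (0 : ℝ), Measurable fun t : I => C r t.1)
    (hC0 : ∀ r > (0 : ℝ), ∀ t ∈ I, 0 ≤ C r t)
    (h12 : ∀ r > (0 : ℝ), ∀ t ∈ I, ∀ p : En n, ∀ x ∈ closedBall (0 : En n) r,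
      ∀ y ∈ closedBall (0 : En n) r, |H t x p - H t y p| ≤ C r t * (1 + ‖p‖) * ‖x - y‖)
    -- (H.1.4)
    (h14 : ∀ t ∈ I, ∀ x : En n, ∀ qb ∈ closure (fdom (H t x)), ∃ ε > (0 : ℝ), ∃ M : ℝ,
      ∀ q ∈ fdom (H t x) ∩ closedBall qb ε, fenchel (H t x) q ≤ (M : EReal)) :
    (∀ t ∈ I, ∀ x : En n,
      (fdom (H t x)).Nonempty ∧ IsClosed (fdom (H t x)) ∧ Convex ℝ (fdom (H t x))) ∧
    (∀ t ∈ I, ∀ r > (0 : ℝ), ∀ x ∈ closedBall (0 : En n) r, ∀ y ∈ closedBall (0 : En n) r,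
      fdom (H t x) ⊆ fdom (H t y) + closedBall 0 (C r t * ‖x - y‖)) := by
  constructor
  · intro t ht x
    refine ⟨?_, ?_, ?_⟩
    · -- nonempty
      obtain ⟨q', b, hb⟩ := exists_affine_le _ (h11 t ht x)
      exact ⟨q', (mem_fdom_iff _ _).2 ⟨b, hb⟩⟩
    · -- closed
      rw [← closure_subset_iff_isClosed]
      intro qb hqb
      obtain ⟨ε, hε, M, hM⟩ := h14 t ht x qb hqb
      by_contra htop
      have htop' : fenchel (H t x) qb = ⊤ := top_le_iff.1 (not_lt.1 htop)
      have hM' : (M : EReal) < fenchel (H t x) qb := by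
        rw [htop']; exact EReal.coe_lt_top M
      have hev : ∀ᶠ q in nhds qb, (M : EReal) < fenchel (H t x) q :=
        fenchel_lsc (H t x) qb _ hM'
      have hball : closedBall qb ε ∈ nhds qb := closedBall_mem_nhds qb hε
      obtain ⟨q, hq1, hq2⟩ := mem_closure_iff_nhds.1 hqb _ (Filter.inter_mem hev hball)
      exact absurd (hM q ⟨hq2, hq1.2⟩) (not_le.2 hq1.1)
    · -- convex
      intro q1 hq1 q2 hq2 a b ha hb hab
      obtain ⟨M1, hM1⟩ := (mem_fdom_iff _ _).1 hq1
      obtain ⟨M2, hM2⟩ := (mem_fdom_iff _ _).1 hq2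
      refine (mem_fdom_iff _ _).2 ⟨a * M1 + b * M2, fun p => ?_⟩
      have hin : (inner ℝ (a • q1 + b • q2) p : ℝ)
          = a * (inner ℝ q1 p : ℝ) + b * (inner ℝ q2 p : ℝ) := by
        rw [inner_add_left, real_inner_smul_left, real_inner_smul_left]
      have t1 := mul_le_mul_of_nonneg_left (hM1 p) ha
      have t2 := mul_le_mul_of_nonneg_left (hM2 p) hb
      rw [hin]
      have h3 : a * H t x p + b * H t x p = H t x p := by
        linear_combination (H t x p) * hab
      linarith
  · -- part (ii)
    intro t ht r hr x hx y hy q hq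
    obtain ⟨M, hM⟩ := (mem_fdom_iff _ _).1 hq
    set c : ℝ := C r t * ‖x - y‖ with hcdef
    have hc0 : 0 ≤ c := mul_nonneg (hC0 r hr t ht) (norm_nonneg _)
    set ℓ : En n → ℝ := fun p => (inner ℝ q p : ℝ) - c * ‖p‖ - (M + c) with hℓ
    have hle : ∀ p, ℓ p ≤ H t y p := by
      intro p
      have h12' := h12 r hr t ht p x hx y hy
      have habs : H t x p - H t y p ≤ C r t * (1 + ‖p‖) * ‖x - y‖ :=
        (le_abs_self _).trans h12'
      have hbe : C r t * (1 + ‖p‖) * ‖x - y‖ = c + c * ‖p‖ := by rw [hcdef]; ring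
      have hMp := hM p
      simp only [hℓ]
      linarith
    have hconc : ConcaveOn ℝ univ ℓ := by
      refine ⟨convex_univ, fun p1 _ p2 _ a b ha hb hab => ?_⟩
      have hnorm : ‖a • p1 + b • p2‖ ≤ a * ‖p1‖ + b * ‖p2‖ := by
        calc ‖a • p1 + b • p2‖ ≤ ‖a • p1‖ + ‖b • p2‖ := norm_add_le _ _
          _ = a * ‖p1‖ + b * ‖p2‖ := by
            rw [norm_smul, norm_smul, Real.norm_eq_abs, Real.norm_eq_abs,
              abs_of_nonneg ha, abs_of_nonneg hb]
      have hin : (inner ℝ q (a • p1 + b • p2) : ℝ)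
          = a * (inner ℝ q p1 : ℝ) + b * (inner ℝ q p2 : ℝ) := by
        rw [inner_add_right, real_inner_smul_right, real_inner_smul_right]
      simp only [hℓ, smul_eq_mul]
      rw [hin]
      have h3 : a * (M + c) + b * (M + c) = M + c := by
        linear_combination (M + c) * hab
      have h4 := mul_le_mul_of_nonneg_left hnorm hc0
      nlinarith
    have hcont : Continuous ℓ := by
      rw [hℓ]
      exact ((continuous_const.inner continuous_id).sub
        (continuous_const.mul continuous_norm)).sub continuous_const
    obtain ⟨q', b, hb1, hb2⟩ := sep_lemma (H t y) ℓ (h11 t ht y) hconc hcont hle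
    have hq' : q' ∈ fdom (H t y) := (mem_fdom_iff _ _).2 ⟨b, hb1⟩
    have hnorm : ‖q - q'‖ ≤ c := by
      apply norm_le_of_inner_le (K := (M + c) - b) hc0
      intro p
      have h2 := hb2 p
      have hsub : (inner ℝ (q - q') p : ℝ) = (inner ℝ q p : ℝ) - (inner ℝ q' p : ℝ) :=
        inner_sub_left _ _ _
      simp only [hℓ] at h2
      linarith
    rw [Set.mem_add]
    exact ⟨q', hq', q - q', mem_closedBall_zero_iff.2 hnorm, by abel⟩
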